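/- Let G be a group, A a G-graded ring with graded local units, Ψ the functor from unital G-graded right A-modules to unital right (G ⋉̂ A)-modules sending a graded module M to the same abelian group with action m·(χ_g ⋉̂ a) = m_g·a (where m_g is the degree-g component of m). Then Ψ is an isomorphism of categories, with inverse Φ sending a unital (G ⋉̂ A)-module N to the same abelian group graded by Φ(N)_g = Σ_{u} N·(χ_g ⋉̂ u) over graded local units u, with A-action m·a = m·(χ_g ⋉̂ a) for m ∈ Φ(N)_g. -/

import Mathlib

/-- A unital `G`-graded right module over the `G`-graded ring `(A, 𝒜)`: an abelian group
`M` with a biadditive, associative right `A`-action, a direct sum decomposition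
`M = ⊕_g M_g` with `M_g·A_h ⊆ M_{gh}`, and `M·A = M`. -/
structure GradedRightModuleStr (G : Type) [Group G] [DecidableEq G] {A : Type}
    [NonUnitalRing A] (𝒜 : G → AddSubgroup A) (M : Type) [AddCommGroup M] where
  act : M → A → M
  act_addl : ∀ (m n : M) (a : A), act (m + n) a = act m a + act n a
  act_addr : ∀ (m : M) (a b : A), act m (a + b) = act m a + act m b
  act_mul : ∀ (m : M) (a b : A), act (act m a) b = act m (a * b)
  grading : G → AddSubgroup M
  internal : DirectSum.IsInternal grading
  act_graded : ∀ (g h : G) (m : M) (a : A), m ∈ grading g → a ∈ 𝒜 h →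
    act m a ∈ grading (g * h)
  unital : ∀ m : M, m ∈ AddSubgroup.closure {x : M | ∃ (n : M) (a : A), x = act n a}

/-- A unital right module over the (possibly nonunital) ring `S`. -/
structure RightModuleStr (S : Type) [NonUnitalRing S] (M : Type) [AddCommGroup M] where
  act : M → S → M
  act_addl : ∀ (m n : M) (a : S), act (m + n) a = act m a + act n a
  act_addr : ∀ (m : M) (a b : S), act m (a + b) = act m a + act m b
  act_mul : ∀ (m : M) (a b : S), act (act m a) b = act m (a * b)
  unital : ∀ m : M, m ∈ AddSubgroup.closure {x : M | ∃ (n : M) (a : S), x = act n a}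

set_option linter.unusedSectionVars false
set_option linter.unusedTactic false
set_option linter.unusedVariables false
set_option maxHeartbeats 1000000

noncomputable section Stmt6Aux

open DirectSum

variable {M : Type} [AddCommGroup M] {ι : Type} [DecidableEq ι]

noncomputable def decEquiv (B : ι → AddSubgroup M) (h : DirectSum.IsInternal B) :
    (⨁ i, B i) ≃+ M :=
  AddEquiv.ofBijective (DirectSum.coeAddMonoidHom B) h

lemma decEquiv_of (B : ι → AddSubgroup M) (h : DirectSum.IsInternal B) (i : ι) (x : B i) :
    decEquiv B h (DirectSum.of (fun i => B i) i x) = (x : M) :=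
  DirectSum.coeAddMonoidHom_of B i x

lemma decEquiv_symm_of_mem (B : ι → AddSubgroup M) (h : DirectSum.IsInternal B)
    {i : ι} {m : M} (hm : m ∈ B i) :
    (decEquiv B h).symm m = DirectSum.of (fun i => B i) i ⟨m, hm⟩ := by
  rw [AddEquiv.symm_apply_eq, decEquiv_of]

noncomputable def projIn (B : ι → AddSubgroup M) (h : DirectSum.IsInternal B) (i : ι) :
    M →+ M :=
  ((B i).subtype.comp (DFinsupp.evalAddMonoidHom i)).comp (decEquiv B h).symm.toAddMonoidHom

lemma projIn_apply (B : ι → AddSubgroup M) (h : DirectSum.IsInternal B) (i : ι) (m : M) :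
    projIn B h i m = ((decEquiv B h).symm m i : M) := rfl

lemma projIn_mem (B : ι → AddSubgroup M) (h : DirectSum.IsInternal B) (i : ι) (m : M) :
    projIn B h i m ∈ B i := ((decEquiv B h).symm m i).2

lemma projIn_of_mem (B : ι → AddSubgroup M) (h : DirectSum.IsInternal B)
    {k : ι} {m : M} (hm : m ∈ B k) (i : ι) :
    projIn B h i m = if k = i then m else 0 := by
  rw [projIn_apply, decEquiv_symm_of_mem B h hm]
  by_cases hik : k = i
  · subst hik; rw [if_pos rfl, DirectSum.of_eq_same]
  · rw [if_neg hik, DirectSum.of_eq_of_ne _ _ _ (Ne.symm hik)]; rfl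

lemma projIn_sum (B : ι → AddSubgroup M) (h : DirectSum.IsInternal B) (m : M) :
    ∃ s : Finset ι, (∀ i ∉ s, projIn B h i m = 0) ∧ ∑ i ∈ s, projIn B h i m = m := by
  classical
  refine ⟨((decEquiv B h).symm m).support, fun i hi => ?_, ?_⟩
  · rw [projIn_apply]
    rw [DFinsupp.notMem_support_iff] at hi
    rw [hi]; rfl
  · have h1 := DirectSum.sum_support_of ((decEquiv B h).symm m)
    have h2 := congrArg (decEquiv B h) h1
    rw [map_sum] at h2
    simpa [decEquiv_of, projIn_apply] using h2

lemma eq_of_eq_on_graded {M' : Type} [AddCommGroup M'] (B : ι → AddSubgroup M)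
    (hB : DirectSum.IsInternal B) (F1 F2 : M →+ M')
    (hg : ∀ i, ∀ m ∈ B i, F1 m = F2 m) (m : M) : F1 m = F2 m := by
  obtain ⟨s, -, hsum⟩ := projIn_sum B hB m
  rw [← hsum, map_sum, map_sum]
  exact Finset.sum_congr rfl fun i _ => hg i _ (projIn_mem B hB i m)

end Stmt6Aux

section ActLemmas

lemma act_basic {M N R : Type} [AddCommGroup M] [AddCommGroup N] (act : M → R → N)
    (haddl : ∀ (m n : M) (a : R), act (m + n) a = act m a + act n a) :
    (∀ a, act 0 a = 0) ∧ (∀ m a, act (-m) a = - act m a) := by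
  have h0 : ∀ a, act 0 a = 0 := by
    intro a
    have h := haddl 0 0 a
    rw [add_zero] at h
    simpa using h
  refine ⟨h0, fun m a => ?_⟩
  have h := haddl m (-m) a
  rw [add_neg_cancel, h0] at h
  exact (eq_neg_of_add_eq_zero_right h.symm)

namespace GradedRightModuleStr

variable {G A : Type} [Group G] [DecidableEq G] [NonUnitalRing A]
  {𝒜 : G → AddSubgroup A} {M : Type} [AddCommGroup M]
  (gm : GradedRightModuleStr G 𝒜 M)

lemma act_zerol (a : A) : gm.act 0 a = 0 := (act_basic gm.act gm.act_addl).1 a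
lemma act_negl (m : M) (a : A) : gm.act (-m) a = - gm.act m a :=
  (act_basic gm.act gm.act_addl).2 m a
lemma act_zeror (m : M) : gm.act m 0 = 0 :=
  (act_basic (fun a mm => gm.act mm a) (fun a b mm => gm.act_addr mm a b)).1 m
lemma act_negr (m : M) (a : A) : gm.act m (-a) = - gm.act m a :=
  (act_basic (fun a mm => gm.act mm a) (fun a b mm => gm.act_addr mm a b)).2 a m

/-- right action by a fixed `a` as an `AddMonoidHom`. -/
def actHomL (a : A) : M →+ M := AddMonoidHom.mk' (fun m => gm.act m a) fun m n => gm.act_addl m n a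
@[simp] lemma actHomL_apply (a : A) (m : M) : gm.actHomL a m = gm.act m a := rfl

def actHomR (m : M) : A →+ M := AddMonoidHom.mk' (fun a => gm.act m a) fun a b => gm.act_addr m a b
@[simp] lemma actHomR_apply (m : M) (a : A) : gm.actHomR m a = gm.act m a := rfl

end GradedRightModuleStr

namespace RightModuleStr

variable {S : Type} [NonUnitalRing S] {M : Type} [AddCommGroup M] (sm : RightModuleStr S M)

lemma act_zerol (a : S) : sm.act 0 a = 0 := (act_basic sm.act sm.act_addl).1 a
lemma act_negl (m : M) (a : S) : sm.act (-m) a = - sm.act m a :=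
  (act_basic sm.act sm.act_addl).2 m a
lemma act_zeror (m : M) : sm.act m 0 = 0 :=
  (act_basic (fun a mm => sm.act mm a) (fun a b mm => sm.act_addr mm a b)).1 m
lemma act_negr (m : M) (a : S) : sm.act m (-a) = - sm.act m a :=
  (act_basic (fun a mm => sm.act mm a) (fun a b mm => sm.act_addr mm a b)).2 a m

def actHomL (a : S) : M →+ M := AddMonoidHom.mk' (fun m => sm.act m a) fun m n => sm.act_addl m n a
@[simp] lemma actHomL_apply (a : S) (m : M) : sm.actHomL a m = sm.act m a := rfl

def actHomR (m : M) : S →+ M := AddMonoidHom.mk' (fun a => sm.act m a) fun a b => sm.act_addr m a b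
@[simp] lemma actHomR_apply (m : M) (a : S) : sm.actHomR m a = sm.act m a := rfl

end RightModuleStr

end ActLemmas

set_option linter.unusedSectionVars false
noncomputable section Psi

open DirectSum

variable {G A S : Type} [Group G] [DecidableEq G] [NonUnitalRing A] [NonUnitalRing S]
variable {𝒜 : G → AddSubgroup A} {𝒰 : Set A} {j : (G →₀ A) ≃+ S}

lemma mem_homClosure (hA : DirectSum.IsInternal 𝒜) (a : A) :
    a ∈ AddSubgroup.closure {b : A | ∃ d, b ∈ 𝒜 d} := by
  obtain ⟨s, -, hsum⟩ := projIn_sum 𝒜 hA a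
  rw [← hsum]
  exact AddSubgroup.sum_mem _ fun d _ => AddSubgroup.subset_closure ⟨d, projIn_mem 𝒜 hA d a⟩

lemma mem_homSingleClosure (hA : DirectSum.IsInternal 𝒜) (j : (G →₀ A) ≃+ S) (s : S) :
    s ∈ AddSubgroup.closure
      {x : S | ∃ (g d : G) (b : A), b ∈ 𝒜 d ∧ x = j (Finsupp.single g b)} := by
  have key : ∀ f : G →₀ A, j f ∈ AddSubgroup.closure
      {x : S | ∃ (g d : G) (b : A), b ∈ 𝒜 d ∧ x = j (Finsupp.single g b)} := by
    intro f
    induction f using Finsupp.induction with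
    | zero => rw [map_zero]; exact zero_mem _
    | single_add g b f hg hb ih =>
      rw [map_add]
      refine add_mem ?_ ih
      refine AddSubgroup.closure_induction
        (p := fun c _ => j (Finsupp.single g c) ∈ AddSubgroup.closure
          {x : S | ∃ (g d : G) (b : A), b ∈ 𝒜 d ∧ x = j (Finsupp.single g b)})
        ?_ ?_ ?_ ?_ (mem_homClosure hA b)
      · rintro c ⟨d, hd⟩
        exact AddSubgroup.subset_closure ⟨g, d, c, hd, rfl⟩
      · beta_reduce
        rw [Finsupp.single_zero, map_zero]; exact zero_mem _
      · intro c c' _ _ hc hc'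
        beta_reduce at hc hc' ⊢
        rw [Finsupp.single_add, map_add]; exact add_mem hc hc'
      · intro c _ hc
        beta_reduce at hc ⊢
        rw [Finsupp.single_neg, map_neg]; exact neg_mem hc
  have : s = j (j.symm s) := (j.apply_symm_apply s).symm
  rw [this]; exact key _

lemma GradedRightModuleStr.exists_unit
    (h𝒰loc : ∀ F : Finset A, ∃ u ∈ 𝒰, ∀ a ∈ F, u * a = a ∧ a * u = a)
    {M : Type} [AddCommGroup M] (gm : GradedRightModuleStr G 𝒜 M) (m : M) :
    ∃ u ∈ 𝒰, gm.act m u = m := by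
  classical
  refine AddSubgroup.closure_induction ?_ ?_ ?_ ?_ (gm.unital m)
  · rintro x ⟨n, a, rfl⟩
    obtain ⟨u, hu, hua⟩ := h𝒰loc {a}
    exact ⟨u, hu, by rw [gm.act_mul, (hua a (Finset.mem_singleton_self a)).2]⟩
  · obtain ⟨u, hu, -⟩ := h𝒰loc ∅
    exact ⟨u, hu, gm.act_zerol u⟩
  · rintro x y hx hy ⟨u1, hu1, h1⟩ ⟨u2, hu2, h2⟩
    obtain ⟨u, hu, huu⟩ := h𝒰loc {u1, u2}
    have e1 : u1 * u = u1 := (huu u1 (by simp)).2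
    have e2 : u2 * u = u2 := (huu u2 (by simp)).2
    refine ⟨u, hu, ?_⟩
    have hx' : gm.act x u = x := by
      conv_lhs => rw [← h1]
      rw [gm.act_mul, e1, h1]
    have hy' : gm.act y u = y := by
      conv_lhs => rw [← h2]
      rw [gm.act_mul, e2, h2]
    rw [gm.act_addl, hx', hy']
  · rintro x hx ⟨u, hu, h1⟩
    exact ⟨u, hu, by rw [gm.act_negl, h1]⟩

noncomputable def PsiAct (j : (G →₀ A) ≃+ S) {M : Type} [AddCommGroup M]
    (gm : GradedRightModuleStr G 𝒜 M) (m : M) (x : S) : M :=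
  (j.symm x).sum fun g a => gm.act (projIn gm.grading gm.internal g m) a

variable {M : Type} [AddCommGroup M] (gm : GradedRightModuleStr G 𝒜 M)

lemma PsiAct_addl (m n : M) (x : S) :
    PsiAct j gm (m + n) x = PsiAct j gm m x + PsiAct j gm n x := by
  simp only [PsiAct, Finsupp.sum, map_add, gm.act_addl, Finset.sum_add_distrib]

lemma PsiAct_addr (m : M) (x y : S) :
    PsiAct j gm m (x + y) = PsiAct j gm m x + PsiAct j gm m y := by
  simp only [PsiAct, map_add]
  exact Finsupp.sum_add_index' (fun g => gm.act_zeror _) (fun g a b => gm.act_addr _ a b)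

lemma PsiAct_zeror (m : M) : PsiAct j gm m 0 = 0 := by
  simp [PsiAct]

lemma PsiAct_zerol (x : S) : PsiAct j gm 0 x = 0 := by
  simp [PsiAct, gm.act_zerol]

lemma PsiAct_negl (m : M) (x : S) : PsiAct j gm (-m) x = - PsiAct j gm m x :=
  (act_basic (PsiAct j gm) (fun m n x => PsiAct_addl gm m n x)).2 m x

lemma PsiAct_negr (m : M) (x : S) : PsiAct j gm m (-x) = - PsiAct j gm m x :=
  (act_basic (fun (x : S) (m : M) => PsiAct j gm m x)
    (fun x y m => PsiAct_addr gm m x y)).2 x m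

lemma PsiAct_single (m : M) (g : G) (a : A) :
    PsiAct j gm m (j (Finsupp.single g a)) = gm.act (projIn gm.grading gm.internal g m) a := by
  unfold PsiAct
  rw [AddEquiv.symm_apply_apply]
  exact Finsupp.sum_single_index (gm.act_zeror _)

lemma PsiAct_of_mem {h : G} {m : M} (hm : m ∈ gm.grading h) (g : G) (a : A) :
    PsiAct j gm m (j (Finsupp.single g a)) = if h = g then gm.act m a else 0 := by
  rw [PsiAct_single, projIn_of_mem gm.grading gm.internal hm g]
  split_ifs with h1
  · rfl
  · exact gm.act_zerol a

lemma PsiAct_mul (hA : DirectSum.IsInternal 𝒜)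
    (hj : ∀ (g h d : G) (b c : A), b ∈ 𝒜 d →
      j (Finsupp.single g b) * j (Finsupp.single h c) =
        if h = g * d then j (Finsupp.single g (b * c)) else 0)
    (m : M) (x y : S) :
    PsiAct j gm (PsiAct j gm m x) y = PsiAct j gm m (x * y) := by
  revert y
  refine AddSubgroup.closure_induction
    (p := fun x _ => ∀ y, PsiAct j gm (PsiAct j gm m x) y = PsiAct j gm m (x * y))
    ?_ ?_ ?_ ?_ (mem_homSingleClosure hA j x)
  · rintro x ⟨g, d, b, hb, rfl⟩ y
    refine AddSubgroup.closure_induction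
      (p := fun y _ => PsiAct j gm (PsiAct j gm m (j (Finsupp.single g b))) y =
        PsiAct j gm m (j (Finsupp.single g b) * y))
      ?_ ?_ ?_ ?_ (mem_homSingleClosure hA j y)
    · rintro y ⟨h, e, c, hc, rfl⟩
      beta_reduce
      rw [PsiAct_single, PsiAct_single, hj g h d b c hb]
      have hmem : gm.act (projIn gm.grading gm.internal g m) b ∈ gm.grading (g * d) :=
        gm.act_graded g d _ b (projIn_mem gm.grading gm.internal g m) hb
      by_cases hcond : h = g * d
      · rw [if_pos hcond, PsiAct_single, ← gm.act_mul]
        congr 1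
        rw [projIn_of_mem gm.grading gm.internal hmem h, if_pos hcond.symm]
      · rw [if_neg hcond, PsiAct_zeror,
          projIn_of_mem gm.grading gm.internal hmem h,
          if_neg (fun hh => hcond hh.symm), gm.act_zerol]
    · beta_reduce
      rw [PsiAct_zeror, mul_zero, PsiAct_zeror]
    · intro y z _ _ hy hz
      beta_reduce at hy hz ⊢
      rw [PsiAct_addr, mul_add, PsiAct_addr, hy, hz]
    · intro y _ hy
      beta_reduce at hy ⊢
      rw [PsiAct_negr, mul_neg, PsiAct_negr, hy]
  · intro y
    beta_reduce
    rw [PsiAct_zeror, PsiAct_zerol, zero_mul, PsiAct_zeror]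
  · intro x z hxm hzm hx hz y
    beta_reduce at hx hz ⊢
    rw [PsiAct_addr, PsiAct_addl, add_mul, PsiAct_addr, hx, hz]
  · intro x hxm hx y
    beta_reduce at hx ⊢
    rw [PsiAct_negr, PsiAct_negl, neg_mul, PsiAct_negr, hx]

noncomputable def PsiStr (hA : DirectSum.IsInternal 𝒜) (j : (G →₀ A) ≃+ S)
    (hj : ∀ (g h d : G) (b c : A), b ∈ 𝒜 d →
      j (Finsupp.single g b) * j (Finsupp.single h c) =
        if h = g * d then j (Finsupp.single g (b * c)) else 0)
    (M : Type) [AddCommGroup M] (gm : GradedRightModuleStr G 𝒜 M) :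
    RightModuleStr S M where
  act := PsiAct j gm
  act_addl := fun m n a => PsiAct_addl gm m n a
  act_addr := fun m a b => PsiAct_addr gm m a b
  act_mul := fun m a b => PsiAct_mul gm hA hj m a b
  unital := by
    intro m
    refine AddSubgroup.closure_induction ?_ ?_ ?_ ?_ (gm.unital m)
    · rintro x ⟨n, a, rfl⟩
      obtain ⟨s, -, hsum⟩ := projIn_sum gm.grading gm.internal n
      have hdec : gm.act n a = ∑ g ∈ s, gm.act (projIn gm.grading gm.internal g n) a := by
        conv_lhs => rw [← hsum]
        exact map_sum (gm.actHomL a) _ s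
      rw [hdec]
      refine AddSubgroup.sum_mem _ fun g _ => AddSubgroup.subset_closure
        ⟨projIn gm.grading gm.internal g n, j (Finsupp.single g a), ?_⟩
      rw [PsiAct_single,
        projIn_of_mem gm.grading gm.internal (projIn_mem gm.grading gm.internal g n) g,
        if_pos rfl]
    · exact zero_mem _
    · intro x y _ _ hx hy; exact add_mem hx hy
    · intro x _ hx; exact neg_mem hx

end Psi

noncomputable section Phi
set_option linter.unusedSectionVars false

open DirectSum

variable {G A S : Type} [Group G] [DecidableEq G] [NonUnitalRing A] [NonUnitalRing S]
variable {𝒜 : G → AddSubgroup A} {𝒰 : Set A}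

noncomputable def PhiGrading (𝒰 : Set A) (j : (G →₀ A) ≃+ S) {M : Type} [AddCommGroup M]
    (sm : RightModuleStr S M) (g : G) : AddSubgroup M :=
  AddSubgroup.closure {x : M | ∃ (n : M) (u : A), u ∈ 𝒰 ∧
    x = sm.act n (j (Finsupp.single g u))}

variable {j : (G →₀ A) ≃+ S} {M : Type} [AddCommGroup M] (sm : RightModuleStr S M)

section WithHyp

lemma Phi_exists_unit (h𝒰hom : ∀ u ∈ 𝒰, u ∈ 𝒜 1 ∧ u * u = u)
    (h𝒰loc : ∀ F : Finset A, ∃ u ∈ 𝒰, ∀ a ∈ F, u * a = a ∧ a * u = a)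
    (hj : ∀ (g h d : G) (b c : A), b ∈ 𝒜 d →
      j (Finsupp.single g b) * j (Finsupp.single h c) =
        if h = g * d then j (Finsupp.single g (b * c)) else 0)
    (g : G) (m : M) (hm : m ∈ PhiGrading 𝒰 j sm g) :
    ∃ u ∈ 𝒰, sm.act m (j (Finsupp.single g u)) = m := by
  classical
  refine AddSubgroup.closure_induction ?_ ?_ ?_ ?_ hm
  · rintro x ⟨n, u', hu', rfl⟩
    obtain ⟨u, hu, huu⟩ := h𝒰loc {u'}
    have e1 : u' * u = u' := (huu u' (Finset.mem_singleton_self u')).2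
    refine ⟨u, hu, ?_⟩
    rw [sm.act_mul, hj g g 1 u' u (h𝒰hom u' hu').1, if_pos (mul_one g).symm, e1]
  · obtain ⟨u, hu, -⟩ := h𝒰loc ∅
    exact ⟨u, hu, sm.act_zerol _⟩
  · rintro x y hx hy ⟨u1, hu1, h1⟩ ⟨u2, hu2, h2⟩
    obtain ⟨u, hu, huu⟩ := h𝒰loc {u1, u2}
    have e1 : u1 * u = u1 := (huu u1 (by simp)).2
    have e2 : u2 * u = u2 := (huu u2 (by simp)).2
    refine ⟨u, hu, ?_⟩
    have hx' : sm.act x (j (Finsupp.single g u)) = x := by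
      conv_lhs => rw [← h1]
      rw [sm.act_mul, hj g g 1 u1 u (h𝒰hom u1 hu1).1, if_pos (mul_one g).symm, e1, h1]
    have hy' : sm.act y (j (Finsupp.single g u)) = y := by
      conv_lhs => rw [← h2]
      rw [sm.act_mul, hj g g 1 u2 u (h𝒰hom u2 hu2).1, if_pos (mul_one g).symm, e2, h2]
    rw [sm.act_addl, hx', hy']
  · rintro x hx ⟨u, hu, h1⟩
    exact ⟨u, hu, by rw [sm.act_negl, h1]⟩

lemma Phi_act_ne (h𝒰hom : ∀ u ∈ 𝒰, u ∈ 𝒜 1 ∧ u * u = u)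
    (hj : ∀ (g h d : G) (b c : A), b ∈ 𝒜 d →
      j (Finsupp.single g b) * j (Finsupp.single h c) =
        if h = g * d then j (Finsupp.single g (b * c)) else 0)
    (g h : G) (hne : g ≠ h) (m : M) (hm : m ∈ PhiGrading 𝒰 j sm h) (a : A) :
    sm.act m (j (Finsupp.single g a)) = 0 := by
  refine AddSubgroup.closure_induction ?_ ?_ ?_ ?_ hm
  · rintro x ⟨n, u, hu, rfl⟩
    rw [sm.act_mul, hj h g 1 u a (h𝒰hom u hu).1, mul_one, if_neg hne, sm.act_zeror]
  · exact sm.act_zerol _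
  · intro x y _ _ hx hy
    rw [sm.act_addl, hx, hy, add_zero]
  · intro x _ hx
    rw [sm.act_negl, hx, neg_zero]

lemma Phi_act_mem (h𝒰loc : ∀ F : Finset A, ∃ u ∈ 𝒰, ∀ a ∈ F, u * a = a ∧ a * u = a)
    (hj : ∀ (g h d : G) (b c : A), b ∈ 𝒜 d →
      j (Finsupp.single g b) * j (Finsupp.single h c) =
        if h = g * d then j (Finsupp.single g (b * c)) else 0)
    (n : M) (g d : G) (a : A) (ha : a ∈ 𝒜 d) :
    sm.act n (j (Finsupp.single g a)) ∈ PhiGrading 𝒰 j sm (g * d) := by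
  classical
  obtain ⟨u, hu, huu⟩ := h𝒰loc {a}
  have e1 : a * u = a := (huu a (Finset.mem_singleton_self a)).2
  have key : sm.act n (j (Finsupp.single g a)) =
      sm.act (sm.act n (j (Finsupp.single g a))) (j (Finsupp.single (g * d) u)) := by
    rw [sm.act_mul, hj g (g * d) d a u ha, if_pos rfl, e1]
  rw [key]
  exact AddSubgroup.subset_closure ⟨_, u, hu, rfl⟩

lemma Phi_internal (h𝒰hom : ∀ u ∈ 𝒰, u ∈ 𝒜 1 ∧ u * u = u)
    (h𝒰loc : ∀ F : Finset A, ∃ u ∈ 𝒰, ∀ a ∈ F, u * a = a ∧ a * u = a)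
    (hj : ∀ (g h d : G) (b c : A), b ∈ 𝒜 d →
      j (Finsupp.single g b) * j (Finsupp.single h c) =
        if h = g * d then j (Finsupp.single g (b * c)) else 0)
    (hA : DirectSum.IsInternal 𝒜) :
    DirectSum.IsInternal (PhiGrading 𝒰 j sm) := by
  classical
  constructor
  · rw [injective_iff_map_eq_zero]
    intro x hx
    refine DFinsupp.ext fun g => ?_
    refine Subtype.ext ?_
    show (x g : M) = (0 : M)
    obtain ⟨u, hu, hXu⟩ := Phi_exists_unit sm h𝒰hom h𝒰loc hj g _ (x g).2
    have hsum : ∑ h ∈ x.support, ((x h : M)) = 0 := by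
      have h1 := DirectSum.sum_support_of x
      have h2 := congrArg (DirectSum.coeAddMonoidHom (PhiGrading 𝒰 j sm)) h1
      rw [map_sum] at h2
      simp only [DirectSum.coeAddMonoidHom_of] at h2
      exact h2.trans hx
    have h0 : ∑ h ∈ x.support, sm.act (x h : M) (j (Finsupp.single g u)) = 0 := by
      calc ∑ h ∈ x.support, sm.act (x h : M) (j (Finsupp.single g u))
          = sm.actHomL (j (Finsupp.single g u)) (∑ h ∈ x.support, ((x h : M))) :=
            (map_sum (sm.actHomL (j (Finsupp.single g u)))
              (fun h => ((x h : M))) x.support).symm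
        _ = 0 := by rw [hsum]; exact sm.act_zerol _
    have h1 : ∑ h ∈ x.support, sm.act (x h : M) (j (Finsupp.single g u)) =
        sm.act (x g : M) (j (Finsupp.single g u)) := by
      refine Finset.sum_eq_single g ?_ ?_
      · intro h _ hne
        exact Phi_act_ne sm h𝒰hom hj g h (Ne.symm hne) _ (x h).2 u
      · intro hg
        rw [DFinsupp.notMem_support_iff] at hg
        rw [hg]
        exact sm.act_zerol _
    rw [← hXu]
    exact h1.symm.trans h0
  · intro m
    have key : m ∈ (DirectSum.coeAddMonoidHom (PhiGrading 𝒰 j sm)).range := by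
      refine AddSubgroup.closure_induction ?_ ?_ ?_ ?_ (sm.unital m)
      · rintro x ⟨n, s, rfl⟩
        refine AddSubgroup.closure_induction
          (p := fun s _ => sm.act n s ∈ (DirectSum.coeAddMonoidHom (PhiGrading 𝒰 j sm)).range)
          ?_ ?_ ?_ ?_ (mem_homSingleClosure hA j s)
        · rintro s ⟨g, d, b, hb, rfl⟩
          beta_reduce
          exact ⟨DirectSum.of (fun g => PhiGrading 𝒰 j sm g) (g * d)
            ⟨_, Phi_act_mem sm h𝒰loc hj n g d b hb⟩, DirectSum.coeAddMonoidHom_of _ _ _⟩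
        · beta_reduce
          rw [sm.act_zeror]; exact zero_mem _
        · intro s t _ _ hs ht
          beta_reduce at hs ht ⊢
          rw [sm.act_addr]; exact add_mem hs ht
        · intro s _ hs
          beta_reduce at hs ⊢
          rw [sm.act_negr]; exact neg_mem hs
      · exact zero_mem _
      · intro x y _ _ hx hy; exact add_mem hx hy
      · intro x _ hx; exact neg_mem hx
    exact key

end WithHyp

noncomputable def PhiAct (hB : DirectSum.IsInternal (PhiGrading 𝒰 j sm)) (m : M) (a : A) : M :=
  DFinsupp.sumAddHom
    (fun g => (sm.actHomL (j (Finsupp.single g a))).comp (PhiGrading 𝒰 j sm g).subtype)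
    ((decEquiv _ hB).symm m)

variable (hB : DirectSum.IsInternal (PhiGrading 𝒰 j sm))

lemma PhiAct_addl (m n : M) (a : A) :
    PhiAct sm hB (m + n) a = PhiAct sm hB m a + PhiAct sm hB n a := by
  unfold PhiAct
  rw [map_add, map_add]

lemma PhiAct_of_mem {g : G} {m : M} (hm : m ∈ PhiGrading 𝒰 j sm g) (a : A) :
    PhiAct sm hB m a = sm.act m (j (Finsupp.single g a)) := by
  unfold PhiAct
  rw [decEquiv_symm_of_mem _ hB hm]
  exact DFinsupp.sumAddHom_single _ _ _

lemma PhiAct_zerol (a : A) : PhiAct sm hB 0 a = 0 :=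
  (act_basic (PhiAct sm hB) (fun m n a => PhiAct_addl sm hB m n a)).1 a

lemma PhiAct_negl (m : M) (a : A) : PhiAct sm hB (-m) a = - PhiAct sm hB m a :=
  (act_basic (PhiAct sm hB) (fun m n a => PhiAct_addl sm hB m n a)).2 m a

lemma PhiAct_addr (m : M) (a b : A) :
    PhiAct sm hB m (a + b) = PhiAct sm hB m a + PhiAct sm hB m b := by
  refine eq_of_eq_on_graded (PhiGrading 𝒰 j sm) hB
    (AddMonoidHom.mk' (fun m => PhiAct sm hB m (a + b))
      (fun m n => PhiAct_addl sm hB m n (a + b)))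
    (AddMonoidHom.mk' (fun m => PhiAct sm hB m a + PhiAct sm hB m b)
      (fun m n => by
        beta_reduce
        rw [PhiAct_addl, PhiAct_addl]
        abel))
    (fun g m hm => ?_) m
  show PhiAct sm hB m (a + b) = PhiAct sm hB m a + PhiAct sm hB m b
  rw [PhiAct_of_mem sm hB hm, PhiAct_of_mem sm hB hm, PhiAct_of_mem sm hB hm,
    Finsupp.single_add, map_add, sm.act_addr]

lemma PhiAct_zeror (m : M) : PhiAct sm hB m 0 = 0 :=
  (act_basic (fun (a : A) (m : M) => PhiAct sm hB m a)
    (fun a b m => PhiAct_addr sm hB m a b)).1 m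

lemma PhiAct_negr (m : M) (a : A) : PhiAct sm hB m (-a) = - PhiAct sm hB m a :=
  (act_basic (fun (a : A) (m : M) => PhiAct sm hB m a)
    (fun a b m => PhiAct_addr sm hB m a b)).2 a m

lemma PhiAct_mul (h𝒰loc : ∀ F : Finset A, ∃ u ∈ 𝒰, ∀ a ∈ F, u * a = a ∧ a * u = a)
    (hj : ∀ (g h d : G) (b c : A), b ∈ 𝒜 d →
      j (Finsupp.single g b) * j (Finsupp.single h c) =
        if h = g * d then j (Finsupp.single g (b * c)) else 0)
    (hA : DirectSum.IsInternal 𝒜) (m : M) (a b : A) :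
    PhiAct sm hB (PhiAct sm hB m a) b = PhiAct sm hB m (a * b) := by
  revert a
  suffices h : ∀ g, ∀ m ∈ PhiGrading 𝒰 j sm g, ∀ a : A,
      PhiAct sm hB (PhiAct sm hB m a) b = PhiAct sm hB m (a * b) by
    intro a
    exact eq_of_eq_on_graded (PhiGrading 𝒰 j sm) hB
      (AddMonoidHom.mk' (fun m => PhiAct sm hB (PhiAct sm hB m a) b)
        (fun m n => by beta_reduce; rw [PhiAct_addl, PhiAct_addl]))
      (AddMonoidHom.mk' (fun m => PhiAct sm hB m (a * b))
        (fun m n => PhiAct_addl sm hB m n (a * b)))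
      (fun g m hm => h g m hm a) m
  intro g m hm a
  refine AddSubgroup.closure_induction
    (p := fun a _ => PhiAct sm hB (PhiAct sm hB m a) b = PhiAct sm hB m (a * b))
    ?_ ?_ ?_ ?_ (mem_homClosure hA a)
  · rintro a ⟨d, hd⟩
    beta_reduce
    rw [PhiAct_of_mem sm hB hm a,
      PhiAct_of_mem sm hB (Phi_act_mem sm h𝒰loc hj m g d a hd) b,
      sm.act_mul, hj g (g * d) d a b hd, if_pos rfl,
      PhiAct_of_mem sm hB hm (a * b)]
  · beta_reduce
    rw [PhiAct_zeror, PhiAct_zerol, zero_mul, PhiAct_zeror]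
  · intro a c _ _ ha hc
    beta_reduce at ha hc ⊢
    rw [PhiAct_addr, PhiAct_addl, add_mul, PhiAct_addr, ha, hc]
  · intro a _ ha
    beta_reduce at ha ⊢
    rw [PhiAct_negr, PhiAct_negl, neg_mul, PhiAct_negr, ha]

noncomputable def PhiStr (hA : DirectSum.IsInternal 𝒜)
    (h𝒰hom : ∀ u ∈ 𝒰, u ∈ 𝒜 1 ∧ u * u = u)
    (h𝒰loc : ∀ F : Finset A, ∃ u ∈ 𝒰, ∀ a ∈ F, u * a = a ∧ a * u = a)
    (j : (G →₀ A) ≃+ S)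
    (hj : ∀ (g h d : G) (b c : A), b ∈ 𝒜 d →
      j (Finsupp.single g b) * j (Finsupp.single h c) =
        if h = g * d then j (Finsupp.single g (b * c)) else 0)
    (M : Type) [AddCommGroup M] (sm : RightModuleStr S M) :
    GradedRightModuleStr G 𝒜 M where
  act := PhiAct sm (Phi_internal sm h𝒰hom h𝒰loc hj hA)
  act_addl := fun m n a => PhiAct_addl sm _ m n a
  act_addr := fun m a b => PhiAct_addr sm _ m a b
  act_mul := fun m a b => PhiAct_mul sm _ h𝒰loc hj hA m a b
  grading := PhiGrading 𝒰 j sm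
  internal := Phi_internal sm h𝒰hom h𝒰loc hj hA
  act_graded := fun g h m a hm ha => by
    rw [PhiAct_of_mem sm _ hm]
    exact Phi_act_mem sm h𝒰loc hj m g h a ha
  unital := by
    intro m
    have hB := Phi_internal sm h𝒰hom h𝒰loc hj hA
    obtain ⟨s, -, hsum⟩ := projIn_sum _ hB m
    rw [← hsum]
    refine AddSubgroup.sum_mem _ fun g _ => ?_
    obtain ⟨u, hu, huu⟩ :=
      Phi_exists_unit sm h𝒰hom h𝒰loc hj g _ (projIn_mem (PhiGrading 𝒰 j sm) hB g m)
    refine AddSubgroup.subset_closure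
      ⟨projIn (PhiGrading 𝒰 j sm) hB g m, u, ?_⟩
    rw [PhiAct_of_mem sm hB (projIn_mem (PhiGrading 𝒰 j sm) hB g m) u, huu]
end Phi

noncomputable section Main
set_option linter.unusedSectionVars false
set_option linter.unusedTactic false
set_option maxHeartbeats 1000000

open DirectSum

variable {G A S : Type} [Group G] [DecidableEq G] [NonUnitalRing A] [NonUnitalRing S]
variable {𝒜 : G → AddSubgroup A} {𝒰 : Set A} {j : (G →₀ A) ≃+ S}

lemma GradedRightModuleStr.ext' {M : Type} [AddCommGroup M]
    {s t : GradedRightModuleStr G 𝒜 M} (h1 : s.act = t.act) (h2 : s.grading = t.grading) :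
    s = t := by
  obtain ⟨a1, b1, c1, d1, e1, f1, g1, i1⟩ := s
  obtain ⟨a2, b2, c2, d2, e2, f2, g2, i2⟩ := t
  dsimp at h1 h2
  subst h1
  subst h2
  rfl

lemma RightModuleStr.ext' {M : Type} [AddCommGroup M]
    {s t : RightModuleStr S M} (h1 : s.act = t.act) : s = t := by
  obtain ⟨a1, b1, c1, d1, e1⟩ := s
  obtain ⟨a2, b2, c2, d2, e2⟩ := t
  dsimp at h1
  subst h1
  rfl

lemma Phi_act_proj {M : Type} [AddCommGroup M] (sm : RightModuleStr S M)
    (h𝒰hom : ∀ u ∈ 𝒰, u ∈ 𝒜 1 ∧ u * u = u)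
    (hj : ∀ (g h d : G) (b c : A), b ∈ 𝒜 d →
      j (Finsupp.single g b) * j (Finsupp.single h c) =
        if h = g * d then j (Finsupp.single g (b * c)) else 0)
    (hB : DirectSum.IsInternal (PhiGrading 𝒰 j sm))
    (g : G) (a : A) (m : M) :
    sm.act m (j (Finsupp.single g a)) =
      sm.act (projIn (PhiGrading 𝒰 j sm) hB g m) (j (Finsupp.single g a)) := by
  obtain ⟨s, hout, hsum⟩ := projIn_sum _ hB m
  have hterm : ∀ h ∈ s, h ≠ g →
      sm.act (projIn (PhiGrading 𝒰 j sm) hB h m) (j (Finsupp.single g a)) = 0 :=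
    fun h _ hne => Phi_act_ne sm h𝒰hom hj g h (Ne.symm hne) _ (projIn_mem _ hB h m) a
  have hLHS : sm.act m (j (Finsupp.single g a)) =
      ∑ h ∈ s, sm.act (projIn (PhiGrading 𝒰 j sm) hB h m) (j (Finsupp.single g a)) := by
    conv_lhs => rw [← hsum]
    exact map_sum (sm.actHomL (j (Finsupp.single g a)))
      (fun h => projIn (PhiGrading 𝒰 j sm) hB h m) s
  rw [hLHS]
  exact Finset.sum_eq_single g hterm
    (fun hg => by rw [hout g hg]; exact sm.act_zerol _)

lemma projIn_comm {M N : Type} [AddCommGroup M] [AddCommGroup N]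
    (BM : G → AddSubgroup M) (hM : DirectSum.IsInternal BM)
    (BN : G → AddSubgroup N) (hN : DirectSum.IsInternal BN)
    (f : M →+ N) (hf : ∀ g (m : M), m ∈ BM g → f m ∈ BN g) (g : G) (m : M) :
    f (projIn BM hM g m) = projIn BN hN g (f m) := by
  obtain ⟨s, hout, hsum⟩ := projIn_sum BM hM m
  have key : projIn BN hN g (f m) = ∑ h ∈ s, projIn BN hN g (f (projIn BM hM h m)) := by
    conv_lhs => rw [← hsum]
    rw [map_sum f (fun h => projIn BM hM h m) s, map_sum (projIn BN hN g) _ s]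
  rw [key,
    Finset.sum_congr rfl (fun h _ => projIn_of_mem BN hN (hf h _ (projIn_mem BM hM h m)) g),
    Finset.sum_ite_eq' s g (fun h => f (projIn BM hM h m))]
  by_cases hg : g ∈ s
  · rw [if_pos hg]
  · rw [if_neg hg, hout g hg, map_zero]

end Main


/-- Let `G` be a group and `A` a `G`-graded ring with graded local units
(with a distinguished set `𝒰` of homogeneous idempotent local units), and let
`S = G ⋉̂ A` be the crossed product, presented by an additive isomorphism
`j : ℤ^{(G)} ⊗ A ≃ S` with multiplication rule
`(χ_g ⋉ b)(χ_h ⋉ c) = δ_{h, g·|b|} χ_g ⋉ bc` for homogeneous `b`.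
Then the functor `Ψ` sending a unital `G`-graded right `A`-module `M` to the same
abelian group with the action `m·(χ_g ⋉ a) = m_g·a` is an isomorphism between the
category of unital graded right `A`-modules and the category of unital right
`S`-modules; its inverse `Φ` sends a unital `S`-module `N` to the same abelian group
graded by `Φ(N)_g = Σ_{u ∈ 𝒰} N·(χ_g ⋉ u)`, with `A`-action `m·a = m·(χ_g ⋉ a)` for
`m ∈ Φ(N)_g`.  (Both functors are the identity on underlying additive maps; the last
clause states the induced bijection on morphisms.) -/
theorem stmt_6 {G A S : Type} [Group G] [DecidableEq G] [NonUnitalRing A]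
    [NonUnitalRing S]
    (𝒜 : G → AddSubgroup A)
    (hAinternal : DirectSum.IsInternal 𝒜)
    (hAmul : ∀ (g h : G) (a b : A), a ∈ 𝒜 g → b ∈ 𝒜 h → a * b ∈ 𝒜 (g * h))
    (𝒰 : Set A)
    (h𝒰hom : ∀ u ∈ 𝒰, u ∈ 𝒜 1 ∧ u * u = u)
    (h𝒰loc : ∀ F : Finset A, ∃ u ∈ 𝒰, ∀ a ∈ F, u * a = a ∧ a * u = a)
    (j : (G →₀ A) ≃+ S)
    (hj : ∀ (g h d : G) (b c : A), b ∈ 𝒜 d →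
      j (Finsupp.single g b) * j (Finsupp.single h c) =
        if h = g * d then j (Finsupp.single g (b * c)) else 0) :
    ∃ (Ψf : ∀ (M : Type) [AddCommGroup M],
        GradedRightModuleStr G 𝒜 M → RightModuleStr S M)
      (Φf : ∀ (M : Type) [AddCommGroup M],
        RightModuleStr S M → GradedRightModuleStr G 𝒜 M),
      -- description of `Ψ`: `m·(χ_g ⋉ a) = m_g·a`
      (∀ (M : Type) [AddCommGroup M] (gm : GradedRightModuleStr G 𝒜 M)
         (g h : G) (a : A) (m : M), m ∈ gm.grading h →
           (Ψf M gm).act m (j (Finsupp.single g a)) =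
             if h = g then gm.act m a else 0) ∧
      -- description of the grading of `Φ(N)`: `Φ(N)_g = Σ_{u ∈ 𝒰} N·(χ_g ⋉ u)`
      (∀ (M : Type) [AddCommGroup M] (sm : RightModuleStr S M) (g : G),
         (Φf M sm).grading g =
           AddSubgroup.closure {x : M | ∃ (n : M) (u : A), u ∈ 𝒰 ∧
             x = sm.act n (j (Finsupp.single g u))}) ∧
      -- description of the `A`-action of `Φ(N)`: `m·a = m·(χ_g ⋉ a)` for `m ∈ Φ(N)_g`
      (∀ (M : Type) [AddCommGroup M] (sm : RightModuleStr S M) (g : G) (m : M) (a : A),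
         m ∈ (Φf M sm).grading g →
           (Φf M sm).act m a = sm.act m (j (Finsupp.single g a))) ∧
      -- `Φ ∘ Ψ = id` and `Ψ ∘ Φ = id`
      (∀ (M : Type) [AddCommGroup M] (gm : GradedRightModuleStr G 𝒜 M),
         Φf M (Ψf M gm) = gm) ∧
      (∀ (M : Type) [AddCommGroup M] (sm : RightModuleStr S M),
         Ψf M (Φf M sm) = sm) ∧
      -- the correspondence on morphisms: an additive map is a morphism of graded
      -- `A`-modules iff it is a morphism of the corresponding `S`-modules
      (∀ (M N : Type) [AddCommGroup M] [AddCommGroup N]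
         (gm : GradedRightModuleStr G 𝒜 M) (gn : GradedRightModuleStr G 𝒜 N)
         (f : M →+ N),
           ((∀ (m : M) (a : A), f (gm.act m a) = gn.act (f m) a) ∧
             (∀ (g : G) (m : M), m ∈ gm.grading g → f m ∈ gn.grading g)) ↔
           (∀ (m : M) (x : S), f ((Ψf M gm).act m x) = (Ψf N gn).act (f m) x)) := by
  classical
  refine ⟨fun M _ gm => PsiStr hAinternal j hj M gm,
          fun M _ sm => PhiStr hAinternal h𝒰hom h𝒰loc j hj M sm,
          ?_, ?_, ?_, ?_, ?_, ?_⟩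
  · intro M _ gm g h a m hm
    exact PsiAct_of_mem gm hm g a
  · intro M _ sm g
    rfl
  · intro M _ sm g m a hm
    exact PhiAct_of_mem sm (Phi_internal sm h𝒰hom h𝒰loc hj hAinternal) hm a
  · -- Φ ∘ Ψ = id
    intro M _ gm
    have hgr : ∀ g, PhiGrading 𝒰 j (PsiStr hAinternal j hj M gm) g = gm.grading g := by
      intro g
      apply le_antisymm
      · refine (AddSubgroup.closure_le _).mpr ?_
        rintro x ⟨n, u, hu, rfl⟩
        show PsiAct j gm n (j (Finsupp.single g u)) ∈ gm.grading g
        rw [PsiAct_single]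
        have h2 := gm.act_graded g 1 _ u (projIn_mem gm.grading gm.internal g n)
          (h𝒰hom u hu).1
        rwa [mul_one] at h2
      · intro m hm
        obtain ⟨u, hu, humu⟩ := gm.exists_unit h𝒰loc m
        refine AddSubgroup.subset_closure ⟨m, u, hu, ?_⟩
        show m = PsiAct j gm m (j (Finsupp.single g u))
        rw [PsiAct_of_mem gm hm, if_pos rfl, humu]
    refine GradedRightModuleStr.ext' ?_ (funext hgr)
    funext m a
    show PhiAct (PsiStr hAinternal j hj M gm)
      (Phi_internal (PsiStr hAinternal j hj M gm) h𝒰hom h𝒰loc hj hAinternal) m a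
        = gm.act m a
    refine eq_of_eq_on_graded (PhiGrading 𝒰 j (PsiStr hAinternal j hj M gm))
      (Phi_internal (PsiStr hAinternal j hj M gm) h𝒰hom h𝒰loc hj hAinternal)
      (AddMonoidHom.mk' (fun m => PhiAct (PsiStr hAinternal j hj M gm)
        (Phi_internal (PsiStr hAinternal j hj M gm) h𝒰hom h𝒰loc hj hAinternal) m a)
        (fun m n => PhiAct_addl _ _ m n a))
      (gm.actHomL a) (fun g m hm => ?_) m
    show PhiAct (PsiStr hAinternal j hj M gm)
      (Phi_internal (PsiStr hAinternal j hj M gm) h𝒰hom h𝒰loc hj hAinternal) m a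
        = gm.act m a
    rw [PhiAct_of_mem _ _ hm a]
    show PsiAct j gm m (j (Finsupp.single g a)) = gm.act m a
    rw [PsiAct_of_mem gm ((hgr g) ▸ hm), if_pos rfl]
  · -- Ψ ∘ Φ = id
    intro M _ sm
    refine RightModuleStr.ext' ?_
    funext m x
    show PsiAct j (PhiStr hAinternal h𝒰hom h𝒰loc j hj M sm) m x = sm.act m x
    refine AddSubgroup.closure_induction
      (p := fun x _ => PsiAct j (PhiStr hAinternal h𝒰hom h𝒰loc j hj M sm) m x = sm.act m x)
      ?_ ?_ ?_ ?_ (mem_homSingleClosure hAinternal j x)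
    · rintro x ⟨g, d, b, hb, rfl⟩
      beta_reduce
      rw [PsiAct_single]
      show PhiAct sm (Phi_internal sm h𝒰hom h𝒰loc hj hAinternal)
        (projIn (PhiGrading 𝒰 j sm) (Phi_internal sm h𝒰hom h𝒰loc hj hAinternal) g m) b
          = sm.act m (j (Finsupp.single g b))
      rw [PhiAct_of_mem sm _ (projIn_mem _ _ g m) b]
      exact (Phi_act_proj sm h𝒰hom hj _ g b m).symm
    · beta_reduce
      rw [PsiAct_zeror, sm.act_zeror]
    · intro x y _ _ hx hy
      beta_reduce at hx hy ⊢
      rw [PsiAct_addr, sm.act_addr, hx, hy]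
    · intro x _ hx
      beta_reduce at hx ⊢
      rw [PsiAct_negr, sm.act_negr, hx]
  · -- morphisms
    intro M N _ _ gm gn f
    constructor
    · rintro ⟨hact, hgrad⟩ m x
      show f (PsiAct j gm m x) = PsiAct j gn (f m) x
      refine AddSubgroup.closure_induction
        (p := fun x _ => f (PsiAct j gm m x) = PsiAct j gn (f m) x)
        ?_ ?_ ?_ ?_ (mem_homSingleClosure hAinternal j x)
      · rintro x ⟨g, d, b, hb, rfl⟩
        beta_reduce
        rw [PsiAct_single, PsiAct_single, hact,
          projIn_comm gm.grading gm.internal gn.grading gn.internal f hgrad g m]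
      · beta_reduce
        rw [PsiAct_zeror, PsiAct_zeror, map_zero]
      · intro x y _ _ hx hy
        beta_reduce at hx hy ⊢
        rw [PsiAct_addr, PsiAct_addr, map_add, hx, hy]
      · intro x _ hx
        beta_reduce at hx ⊢
        rw [PsiAct_negr, PsiAct_negr, map_neg, hx]
    · intro hcomm
      have hcomm' : ∀ (m : M) (x : S), f (PsiAct j gm m x) = PsiAct j gn (f m) x := hcomm
      have hgrad : ∀ g (m : M), m ∈ gm.grading g → f m ∈ gn.grading g := by
        intro g m hm
        obtain ⟨u, hu, humu⟩ := gm.exists_unit h𝒰loc m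
        have h1 : PsiAct j gm m (j (Finsupp.single g u)) = m := by
          rw [PsiAct_of_mem gm hm, if_pos rfl, humu]
        have h2 := hcomm' m (j (Finsupp.single g u))
        rw [h1] at h2
        rw [h2, PsiAct_single]
        have h3 := gn.act_graded g 1 _ u (projIn_mem gn.grading gn.internal g (f m))
          (h𝒰hom u hu).1
        rwa [mul_one] at h3
      refine ⟨fun m a => ?_, hgrad⟩
      refine eq_of_eq_on_graded gm.grading gm.internal
        (f.comp (gm.actHomL a)) ((gn.actHomL a).comp f) (fun g m hm => ?_) m
      show f (gm.act m a) = gn.act (f m) a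
      have h1 : gm.act m a = PsiAct j gm m (j (Finsupp.single g a)) := by
        rw [PsiAct_of_mem gm hm, if_pos rfl]
      rw [h1, hcomm' m (j (Finsupp.single g a)), PsiAct_single,
        projIn_of_mem gn.grading gn.internal (hgrad g m hm) g, if_pos rfl]
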